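/- Let R be a Dedekind domain with torsion ideal class group and E an infinite set of maximal ideals of R. Let π : R → S := ∏_{𝔭∈E} R_𝔭 be the canonical map into the product of localizations. Then Im π* = E ∪ {0}, which equals the closure of E in the flat topology on Spec(R), and for every prime ideal P of S containing the direct sum ideal ⊕_{𝔭∈E} R_𝔭 one has π⁻¹(P) = 0. -/

import Mathlib

/-- The flat (inverse) topology on `Spec R`: the sets `V(a)`, `a ∈ R`, form a subbasis
of opens. -/
def flatTopology (R : Type*) [CommRing R] : TopologicalSpace (PrimeSpectrum R) :=
  TopologicalSpace.generateFrom {U | ∃ a : R, U = PrimeSpectrum.zeroLocus {a}}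

lemma aux_finite_primes_mem {R : Type*} [CommRing R] [IsDedekindDomain R] {r : R} (hr : r ≠ 0) :
    {p : PrimeSpectrum R | r ∈ p.asIdeal}.Finite := by
  have h : Ideal.span {r} ≠ (0 : Ideal R) := by simpa using hr
  have key := Ideal.finite_factors h
  have hsub : {p : PrimeSpectrum R | r ∈ p.asIdeal} ⊆
      (fun v : IsDedekindDomain.HeightOneSpectrum R =>
        (⟨v.asIdeal, v.isPrime⟩ : PrimeSpectrum R)) '' {v | v.asIdeal ∣ Ideal.span {r}} := by
    intro p hp
    have hne : p.asIdeal ≠ ⊥ := fun hb => hr (by simpa [hb] using hp)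
    refine ⟨⟨p.asIdeal, p.isPrime, hne⟩, ?_, rfl⟩
    rw [Set.mem_setOf_eq, Ideal.dvd_iff_le, Ideal.span_le, Set.singleton_subset_iff]
    exact hp
  exact (key.image _).subset hsub

lemma aux_part3 {R : Type*} [CommRing R] [IsDedekindDomain R]
    (E : Set (PrimeSpectrum R))
    (P : Ideal (∀ p : E, Localization.AtPrime (p : PrimeSpectrum R).asIdeal)) (hP : P.IsPrime)
    (hJ : ∀ f : ∀ p : E, Localization.AtPrime (p : PrimeSpectrum R).asIdeal,
      {p | f p ≠ 0}.Finite → f ∈ P) :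
    P.comap (Pi.ringHom fun p : E =>
        algebraMap R (Localization.AtPrime (p : PrimeSpectrum R).asIdeal)) = ⊥ := by
  classical
  ext r
  simp only [Ideal.mem_comap, Ideal.mem_bot]
  constructor
  · intro hr
    by_contra hr0
    have hu : ∀ p : E, r ∉ (p : PrimeSpectrum R).asIdeal →
        IsUnit (algebraMap R (Localization.AtPrime (p : PrimeSpectrum R).asIdeal) r) :=
      fun p hp => IsLocalization.map_units _
        (⟨r, hp⟩ : (p : PrimeSpectrum R).asIdeal.primeCompl)
    set π := Pi.ringHom fun p : E =>
        algebraMap R (Localization.AtPrime (p : PrimeSpectrum R).asIdeal) with hπ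
    set g : ∀ p : E, Localization.AtPrime (p : PrimeSpectrum R).asIdeal :=
      fun p => if h : r ∈ (p : PrimeSpectrum R).asIdeal then 0 else ↑(hu p h).unit⁻¹ with hg
    have hfin : {p : E | r ∈ (p : PrimeSpectrum R).asIdeal}.Finite :=
      ((aux_finite_primes_mem hr0).preimage Subtype.coe_injective.injOn)
    have hsupp : {p : E | (1 - π r * g) p ≠ 0}.Finite := by
      refine hfin.subset fun p hp => ?_
      simp only [Set.mem_setOf_eq] at hp ⊢
      by_contra hnp
      apply hp
      simp only [Pi.sub_apply, Pi.mul_apply, Pi.one_apply, hg]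
      rw [dif_neg hnp]
      exact sub_eq_zero.mpr (IsUnit.mul_val_inv (hu p hnp)).symm
    have h1 : (1 : ∀ p : E, Localization.AtPrime (p : PrimeSpectrum R).asIdeal) ∈ P := by
      have := P.add_mem (hJ _ hsupp) (Ideal.mul_mem_right g P hr)
      simpa using this
    exact hP.ne_top ((Ideal.eq_top_iff_one P).mpr h1)
  · intro h
    rw [h, map_zero]
    exact P.zero_mem

lemma aux_closure {R : Type*} [CommRing R] [IsDedekindDomain R]
    (E : Set (PrimeSpectrum R)) (hmax : ∀ p ∈ E, p.asIdeal.IsMaximal) (hInf : E.Infinite) :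
    @closure _ (flatTopology R) E = insert ⟨⊥, Ideal.bot_prime⟩ E := by
  classical
  letI := flatTopology R
  have hB : TopologicalSpace.IsTopologicalBasis
      ((fun f : Set (Set (PrimeSpectrum R)) => ⋂₀ f) ''
        {f : Set (Set (PrimeSpectrum R)) | f.Finite ∧
          f ⊆ {U | ∃ a : R, U = PrimeSpectrum.zeroLocus {a}}}) :=
    TopologicalSpace.isTopologicalBasis_of_subbasis rfl
  apply subset_antisymm
  · apply closure_minimal (Set.subset_insert _ _)
    rw [← isOpen_compl_iff, isOpen_iff_forall_mem_open]
    intro x hx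
    simp only [Set.mem_compl_iff, Set.mem_insert_iff, not_or] at hx
    obtain ⟨hxb, hxE⟩ := hx
    have hxne : x.asIdeal ≠ ⊥ := fun h => hxb (PrimeSpectrum.ext h)
    obtain ⟨a, haI, ha0⟩ := Submodule.exists_mem_ne_zero_of_ne_bot hxne
    have hxmax : x.asIdeal.IsMaximal := x.isPrime.isMaximal hxne
    have hF : {p : PrimeSpectrum R | p ∈ E ∧ a ∈ p.asIdeal}.Finite :=
      (aux_finite_primes_mem ha0).subset fun p hp => hp.2
    -- prime avoidance: find b ∈ x.asIdeal avoiding all primes in F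
    have havoid : ¬ ((x.asIdeal : Set R) ⊆ ⋃ p ∈ (hF.toFinset : Set (PrimeSpectrum R)),
        p.asIdeal) := by
      rw [Ideal.subset_union_prime x x (fun i _ _ _ => i.isPrime)]
      rintro ⟨p, hpF, hle⟩
      rw [Set.Finite.mem_toFinset] at hpF
      have : x = p := PrimeSpectrum.ext (hxmax.eq_of_le p.isPrime.ne_top hle)
      exact hxE (this ▸ hpF.1)
    rw [Set.not_subset] at havoid
    obtain ⟨b, hbI, hb⟩ := havoid
    refine ⟨PrimeSpectrum.zeroLocus {a} ∩ PrimeSpectrum.zeroLocus {b}, ?_, ?_, ?_⟩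
    · rintro p ⟨hpa, hpb⟩
      simp only [PrimeSpectrum.mem_zeroLocus, Set.singleton_subset_iff, SetLike.mem_coe] at hpa hpb
      simp only [Set.mem_compl_iff, Set.mem_insert_iff, not_or]
      constructor
      · rintro rfl
        exact ha0 hpa
      · intro hpE
        apply hb
        refine Set.mem_biUnion ?_ hpb
        rw [Set.Finite.coe_toFinset]
        exact ⟨hpE, hpa⟩
    · exact IsOpen.inter (TopologicalSpace.isOpen_generateFrom_of_mem ⟨a, rfl⟩)
        (TopologicalSpace.isOpen_generateFrom_of_mem ⟨b, rfl⟩)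
    · constructor <;> simp only [PrimeSpectrum.mem_zeroLocus, Set.singleton_subset_iff,
        SetLike.mem_coe] <;> assumption
  · intro x hx
    rcases hx with hx | hx
    · subst hx
      rw [hB.mem_closure_iff]
      rintro o ⟨f, ⟨hf, hfs⟩, rfl⟩ hbo
      have hEo : E ⊆ ⋂₀ f := by
        intro p hp U hU
        obtain ⟨a, rfl⟩ := hfs hU
        have ha : a = 0 := by
          have h2 := Set.mem_sInter.mp hbo _ hU
          simpa [PrimeSpectrum.mem_zeroLocus] using h2
        subst ha
        simp [PrimeSpectrum.mem_zeroLocus]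
      obtain ⟨p, hp⟩ := hInf.nonempty
      exact ⟨p, hEo hp, hp⟩
    · exact subset_closure hx

lemma aux_range {R : Type*} [CommRing R] [IsDedekindDomain R]
    (E : Set (PrimeSpectrum R)) (hmax : ∀ p ∈ E, p.asIdeal.IsMaximal) (hInf : E.Infinite) :
    Set.range
        (PrimeSpectrum.comap
          (Pi.ringHom fun p : E =>
            algebraMap R (Localization.AtPrime (p : PrimeSpectrum R).asIdeal))) =
      insert ⟨⊥, Ideal.bot_prime⟩ E := by
  classical
  set π := Pi.ringHom fun p : E =>
      algebraMap R (Localization.AtPrime (p : PrimeSpectrum R).asIdeal) with hπ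
  apply subset_antisymm
  · rintro _ ⟨Q, rfl⟩
    rw [Set.mem_insert_iff]
    by_cases hc : ∀ f : ∀ p : E, Localization.AtPrime (p : PrimeSpectrum R).asIdeal,
        {p | f p ≠ 0}.Finite → f ∈ Q.asIdeal
    · exact Or.inl (PrimeSpectrum.ext (by
        rw [PrimeSpectrum.comap_asIdeal]
        exact aux_part3 E Q.asIdeal Q.isPrime hc))
    · push_neg at hc
      obtain ⟨f, hffin, hfQ⟩ := hc
      have hdecomp : f = ∑ p ∈ hffin.toFinset, Pi.single p (f p) := by
        funext q
        rw [Finset.sum_apply]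
        by_cases hq : q ∈ hffin.toFinset
        · have h1 : (∑ c ∈ hffin.toFinset, Pi.single c (f c) q) = (Pi.single q (f q) : ∀ c : E, Localization.AtPrime (c : PrimeSpectrum R).asIdeal) q := by
            apply Finset.sum_eq_single_of_mem q hq
            intro p hp hpq
            exact Pi.single_eq_of_ne (M := fun c : E => Localization.AtPrime (c : PrimeSpectrum R).asIdeal) hpq.symm (f p)
          rw [h1, Pi.single_eq_same]
        · have hz : ∑ c ∈ hffin.toFinset, Pi.single c (f c) q = 0 := by
            apply Finset.sum_eq_zero
            intro p hp
            exact Pi.single_eq_of_ne (M := fun c : E => Localization.AtPrime (c : PrimeSpectrum R).asIdeal) (fun h => hq (by rw [h]; exact hp)) (f p)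
          simp only [Set.Finite.mem_toFinset, Set.mem_setOf_eq, not_not] at hq
          rw [hz, hq]
      have hex : ∃ p ∈ hffin.toFinset, Pi.single p (f p) ∉ Q.asIdeal := by
        by_contra h
        push_neg at h
        exact hfQ (hdecomp ▸ Ideal.sum_mem _ h)
      obtain ⟨p, _, hps⟩ := hex
      have he : (Pi.single p 1 :
          ∀ p : E, Localization.AtPrime (p : PrimeSpectrum R).asIdeal) ∉ Q.asIdeal := by
        intro he
        apply hps
        have hprod : (Pi.single p (f p) : ∀ q : E, Localization.AtPrime (q : PrimeSpectrum R).asIdeal) = Pi.single p (f p) * Pi.single p 1 := by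
          funext q
          by_cases hq : q = p
          · subst hq; simp [Pi.single_eq_same]
          · simp [Pi.single_eq_of_ne hq]
        rw [hprod]
        exact Ideal.mul_mem_left _ _ he
      have hle : Q.asIdeal.comap π ≤ (p : PrimeSpectrum R).asIdeal := by
        intro r hr
        by_contra hrp
        have hu : IsUnit (algebraMap R (Localization.AtPrime (p : PrimeSpectrum R).asIdeal) r) :=
          IsLocalization.map_units _ (⟨r, hrp⟩ : (p : PrimeSpectrum R).asIdeal.primeCompl)
        apply he
        have hmul : π r * (Pi.single p (↑hu.unit⁻¹) : ∀ q : E, Localization.AtPrime (q : PrimeSpectrum R).asIdeal) = Pi.single p 1 := by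
          funext q
          by_cases hq : q = p
          · subst hq
            simp only [Pi.mul_apply, Pi.single_eq_same, hπ, Pi.ringHom_apply]
            exact hu.mul_val_inv
          · simp [Pi.single_eq_of_ne hq]
        rw [← hmul]
        exact Ideal.mul_mem_right _ _ hr
      by_cases hbot : Q.asIdeal.comap π = ⊥
      · exact Or.inl (PrimeSpectrum.ext (by rw [PrimeSpectrum.comap_asIdeal]; exact hbot))
      · refine Or.inr ?_
        have hm : (Q.asIdeal.comap π).IsMaximal :=
          (Ideal.IsPrime.comap π (hK := Q.isPrime)).isMaximal hbot
        have heq : Q.asIdeal.comap π = (p : PrimeSpectrum R).asIdeal :=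
          hm.eq_of_le (p : PrimeSpectrum R).isPrime.ne_top hle
        have : PrimeSpectrum.comap π Q = (p : PrimeSpectrum R) :=
          PrimeSpectrum.ext (by rw [PrimeSpectrum.comap_asIdeal]; exact heq)
        rw [this]
        exact p.2
  · intro x hx
    rcases Set.mem_insert_iff.mp hx with hx | hx
    · subst hx
      set J : Ideal (∀ p : E, Localization.AtPrime (p : PrimeSpectrum R).asIdeal) :=
        { carrier := {f | {p | f p ≠ 0}.Finite},
          add_mem' := by
            intro a b ha hb
            refine ((Set.Finite.union ha hb).subset ?_ : _)
            intro p hp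
            simp only [Set.mem_setOf_eq, Set.mem_union] at hp ⊢
            by_contra h
            push_neg at h
            exact hp (by simp [h.1, h.2])
          zero_mem' := by simp
          smul_mem' := by
            intro c f hf
            refine (Set.Finite.subset hf ?_ : _)
            intro p hp
            simp only [Set.mem_setOf_eq, smul_eq_mul, Pi.mul_apply] at hp ⊢
            intro h
            exact hp (by rw [h, mul_zero]) } with hJdef
      have hJtop : J ≠ ⊤ := by
        intro h
        have h1 : (1 : ∀ p : E, Localization.AtPrime (p : PrimeSpectrum R).asIdeal) ∈ J :=
          h ▸ Submodule.mem_top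
        have hfin : {p : E |
            (1 : ∀ p : E, Localization.AtPrime (p : PrimeSpectrum R).asIdeal) p ≠ 0}.Finite := h1
        haveI : Infinite E := Set.infinite_coe_iff.mpr hInf
        have huniv : {p : E |
            (1 : ∀ p : E, Localization.AtPrime (p : PrimeSpectrum R).asIdeal) p ≠ 0} =
            Set.univ := by
          ext p
          simp [one_ne_zero]
        rw [huniv] at hfin
        exact Set.infinite_univ hfin
      obtain ⟨M, hM, hJM⟩ := Ideal.exists_le_maximal J hJtop
      refine ⟨⟨M, hM.isPrime⟩, ?_⟩
      apply PrimeSpectrum.ext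
      rw [PrimeSpectrum.comap_asIdeal]
      exact aux_part3 E M hM.isPrime fun f hf => hJM hf
    · set p : E := ⟨x, hx⟩ with hpdef
      refine ⟨⟨Ideal.comap (Pi.evalRingHom _ p)
        (IsLocalRing.maximalIdeal (Localization.AtPrime x.asIdeal)), inferInstance⟩, ?_⟩
      apply PrimeSpectrum.ext
      rw [PrimeSpectrum.comap_asIdeal, Ideal.comap_comap]
      exact Localization.AtPrime.comap_maximalIdeal

/-- Let `R` be a Dedekind domain with torsion ideal class group and `E` an infinite set of
maximal ideals of `R`. Let `π : R → S = ∏_{𝔭∈E} R_𝔭` be the canonical map into the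
product of localizations. Then `Im π* = E ∪ {0}`, this set equals the closure of `E` in
the flat topology, and every prime of `S` containing the direct sum ideal `⊕_{𝔭∈E} R_𝔭`
contracts to `0`. -/
theorem stmt_13 {R : Type*} [CommRing R] [IsDedekindDomain R]
    (htor : Monoid.IsTorsion (ClassGroup R))
    (E : Set (PrimeSpectrum R)) (hmax : ∀ p ∈ E, p.asIdeal.IsMaximal) (hInf : E.Infinite) :
    Set.range
        (PrimeSpectrum.comap
          (Pi.ringHom fun p : E =>
            algebraMap R (Localization.AtPrime (p : PrimeSpectrum R).asIdeal))) =
        insert ⟨⊥, Ideal.bot_prime⟩ E ∧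
      @closure _ (flatTopology R) E = insert ⟨⊥, Ideal.bot_prime⟩ E ∧
      ∀ P : Ideal (∀ p : E, Localization.AtPrime (p : PrimeSpectrum R).asIdeal), P.IsPrime →
        (∀ f : ∀ p : E, Localization.AtPrime (p : PrimeSpectrum R).asIdeal,
          {p | f p ≠ 0}.Finite → f ∈ P) →
        P.comap (Pi.ringHom fun p : E =>
            algebraMap R (Localization.AtPrime (p : PrimeSpectrum R).asIdeal)) = ⊥ := by
  exact ⟨aux_range E hmax hInf, aux_closure E hmax hInf, fun P hP hJ => aux_part3 E P hP hJ⟩
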